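/- Let P_T = P₂ + span{ξ³, η³} be the shape function space of the rectangular Morley element on the reference square T̂ = [−1,1]² with vertices a₁=(−1,−1), a₂=(1,−1), a₃=(1,1), a₄=(−1,1) and edges e₁={ξ=1}, e₂={ξ=−1}, e₃={η=1}, e₄={η=−1}. Then the eight functionals v ↦ v(a_i), i=1..4, and v ↦ (1/|e_i|)∫_{e_i} ∂v/∂n ds, i=1..4, form a basis of the dual of P_T; i.e., any v ∈ P_T with all eight degrees of freedom zero is identically zero. -/

import Mathlib

open MeasureTheory intervalIntegral

/-- A generic element of the shape function space
`P_T = P₂ + span{ξ³, η³}` of the rectangular Morley element. -/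
noncomputable def morleyShape (c : Fin 8 → ℝ) (ξ η : ℝ) : ℝ :=
  c 0 + c 1 * ξ + c 2 * η + c 3 * ξ^2 + c 4 * (ξ * η) + c 5 * η^2 +
    c 6 * ξ^3 + c 7 * η^3

lemma morley_hasDerivAt_xi (c : Fin 8 → ℝ) (η x : ℝ) :
    HasDerivAt (fun ξ => morleyShape c ξ η)
      (c 1 + 2 * c 3 * x + c 4 * η + 3 * c 6 * x ^ 2) x := by
  unfold morleyShape
  have h1 := (hasDerivAt_id x).const_mul (c 1)
  have h2 := (hasDerivAt_pow 2 x).const_mul (c 3)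
  have h3 := ((hasDerivAt_id x).mul_const η).const_mul (c 4)
  have h4 := (hasDerivAt_pow 3 x).const_mul (c 6)
  have h5 := hasDerivAt_const x (c 0)
  have h6 := hasDerivAt_const x (c 2 * η)
  have h7 := hasDerivAt_const x (c 5 * η ^ 2)
  have h8 := hasDerivAt_const x (c 7 * η ^ 3)
  have H := ((((((h5.add h1).add h6).add h2).add h3).add h7).add h4).add h8
  refine H.congr_deriv ?_
  push_cast
  ring

lemma morley_int (a b : ℝ) : (∫ t in (-1:ℝ)..1, (a + b * t)) = 2 * a := by
  have h1 : IntervalIntegrable (fun _ : ℝ => a) volume (-1) 1 := intervalIntegrable_const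
  have h2 : IntervalIntegrable (fun t : ℝ => b * t) volume (-1) 1 :=
    (continuous_const.mul continuous_id).intervalIntegrable _ _
  rw [intervalIntegral.integral_add h1 h2, intervalIntegral.integral_const,
    intervalIntegral.integral_const_mul, integral_id]
  norm_num

/-- Unisolvence of the rectangular Morley element on `T̂ = [-1,1]²`: if all four
vertex values and all four edge mean normal derivatives of `v ∈ P_T` vanish,
then `v ≡ 0`.  (Hence the eight degrees of freedom form a basis of `P_T'`.) -/
theorem rectangular_morley_unisolvent (c : Fin 8 → ℝ)
    (hv1 : morleyShape c (-1) (-1) = 0) (hv2 : morleyShape c 1 (-1) = 0)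
    (hv3 : morleyShape c 1 1 = 0) (hv4 : morleyShape c (-1) 1 = 0)
    -- edge e₁ = {ξ = 1}, outward normal derivative ∂/∂ξ
    (he1 : (1/2) * ∫ η in (-1:ℝ)..1, deriv (fun ξ => morleyShape c ξ η) 1 = 0)
    -- edge e₂ = {ξ = -1}, outward normal derivative -∂/∂ξ
    (he2 : (1/2) * ∫ η in (-1:ℝ)..1, -deriv (fun ξ => morleyShape c ξ η) (-1) = 0)
    -- edge e₃ = {η = 1}, outward normal derivative ∂/∂η
    (he3 : (1/2) * ∫ ξ in (-1:ℝ)..1, deriv (fun η => morleyShape c ξ η) 1 = 0)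
    -- edge e₄ = {η = -1}, outward normal derivative -∂/∂η
    (he4 : (1/2) * ∫ ξ in (-1:ℝ)..1, -deriv (fun η => morleyShape c ξ η) (-1) = 0) :
    ∀ ξ η : ℝ, morleyShape c ξ η = 0 := by
  have hdξ : ∀ η x : ℝ, deriv (fun ξ => morleyShape c ξ η) x
      = c 1 + 2 * c 3 * x + c 4 * η + 3 * c 6 * x ^ 2 :=
    fun η x => (morley_hasDerivAt_xi c η x).deriv
  have hdη : ∀ ξ x : ℝ, deriv (fun η => morleyShape c ξ η) x
      = c 2 + 2 * c 5 * x + c 4 * ξ + 3 * c 7 * x ^ 2 := by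
    intro ξ x
    have : (fun η => morleyShape c ξ η)
        = fun η => morleyShape (![c 0, c 2, c 1, c 5, c 4, c 3, c 7, c 6]) η ξ := by
      funext η
      simp only [morleyShape,
        show (![c 0, c 2, c 1, c 5, c 4, c 3, c 7, c 6] : Fin 8 → ℝ) 0 = c 0 from rfl,
        show (![c 0, c 2, c 1, c 5, c 4, c 3, c 7, c 6] : Fin 8 → ℝ) 1 = c 2 from rfl,
        show (![c 0, c 2, c 1, c 5, c 4, c 3, c 7, c 6] : Fin 8 → ℝ) 2 = c 1 from rfl,
        show (![c 0, c 2, c 1, c 5, c 4, c 3, c 7, c 6] : Fin 8 → ℝ) 3 = c 5 from rfl,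
        show (![c 0, c 2, c 1, c 5, c 4, c 3, c 7, c 6] : Fin 8 → ℝ) 4 = c 4 from rfl,
        show (![c 0, c 2, c 1, c 5, c 4, c 3, c 7, c 6] : Fin 8 → ℝ) 5 = c 3 from rfl,
        show (![c 0, c 2, c 1, c 5, c 4, c 3, c 7, c 6] : Fin 8 → ℝ) 6 = c 7 from rfl,
        show (![c 0, c 2, c 1, c 5, c 4, c 3, c 7, c 6] : Fin 8 → ℝ) 7 = c 6 from rfl]
      ring
    rw [this]
    rw [(morley_hasDerivAt_xi (![c 0, c 2, c 1, c 5, c 4, c 3, c 7, c 6]) ξ x).deriv]; rfl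
  -- rewrite the edge integrals
  have E1 : c 1 + 2 * c 3 + 3 * c 6 = 0 := by
    have : (∫ η in (-1:ℝ)..1, deriv (fun ξ => morleyShape c ξ η) 1)
        = ∫ η in (-1:ℝ)..1, ((c 1 + 2 * c 3 + 3 * c 6) + c 4 * η) := by
      apply intervalIntegral.integral_congr; intro η _; simp only [hdξ]; ring
    rw [this, morley_int] at he1; linarith
  have E2 : c 1 - 2 * c 3 + 3 * c 6 = 0 := by
    have : (∫ η in (-1:ℝ)..1, -deriv (fun ξ => morleyShape c ξ η) (-1))
        = ∫ η in (-1:ℝ)..1, (-(c 1 - 2 * c 3 + 3 * c 6) + -(c 4) * η) := by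
      apply intervalIntegral.integral_congr; intro η _; simp only [hdξ]; ring
    rw [this, morley_int] at he2; linarith
  have E3 : c 2 + 2 * c 5 + 3 * c 7 = 0 := by
    have : (∫ ξ in (-1:ℝ)..1, deriv (fun η => morleyShape c ξ η) 1)
        = ∫ ξ in (-1:ℝ)..1, ((c 2 + 2 * c 5 + 3 * c 7) + c 4 * ξ) := by
      apply intervalIntegral.integral_congr; intro ξ _; simp only [hdη]; ring
    rw [this, morley_int] at he3; linarith
  have E4 : c 2 - 2 * c 5 + 3 * c 7 = 0 := by
    have : (∫ ξ in (-1:ℝ)..1, -deriv (fun η => morleyShape c ξ η) (-1))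
        = ∫ ξ in (-1:ℝ)..1, (-(c 2 - 2 * c 5 + 3 * c 7) + -(c 4) * ξ) := by
      apply intervalIntegral.integral_congr; intro ξ _; simp only [hdη]; ring
    rw [this, morley_int] at he4; linarith
  simp only [morleyShape] at hv1 hv2 hv3 hv4 ⊢
  intro ξ η
  have h0 : c 0 = 0 := by linarith
  have h4 : c 4 = 0 := by linarith
  have h3 : c 3 = 0 := by linarith
  have h5 : c 5 = 0 := by linarith
  have h6 : c 6 = 0 := by linarith
  have h7 : c 7 = 0 := by linarith
  have h1 : c 1 = 0 := by linarith
  have h2 : c 2 = 0 := by linarith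
  simp [h0, h1, h2, h3, h4, h5, h6, h7]
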